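/- Let G be a torsion-free abelian group, let R be a G-graded commutative ring, let I be a graded radical ideal of R (i.e., I is graded and equals its own radical), and let J be an arbitrary ideal of R. Then the colon ideal I :_R J = {r ∈ R : rJ ⊆ I} is a graded ideal. -/

import Mathlib

set_option maxHeartbeats 4000000


private theorem colon_aux {ι : Type*} [AddCommMonoid ι] [LinearOrder ι] [IsOrderedCancelAddMonoid ι]
    {R : Type*} [CommRing R] (𝒜 : ι → AddSubgroup R) [GradedRing 𝒜]
    (I J : Ideal R) (hI : Ideal.IsHomogeneous 𝒜 I) (hrad : I.IsRadical) :
    Ideal.IsHomogeneous 𝒜 (I.colon J) := by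
  have hIeq : I = sInf { P : Ideal R | Ideal.IsHomogeneous 𝒜 P ∧ I ≤ P ∧ P.IsPrime } :=
    hrad.radical.symm.trans hI.radical_eq
  intro g r hr
  rw [Submodule.mem_colon] at hr ⊢
  intro j hj
  rw [smul_eq_mul, hIeq, Ideal.mem_sInf]
  rintro P ⟨hPhom, hIP, hPprime⟩
  by_cases hJP : J ≤ P
  · exact Ideal.mul_mem_left P _ (hJP hj)
  · obtain ⟨j₀, hj₀J, hj₀P⟩ := SetLike.not_le_iff_exists.mp hJP
    have hrj₀ : r * j₀ ∈ P := hIP (by simpa [smul_eq_mul] using hr j₀ hj₀J)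
    have hrP : r ∈ P := (hPprime.mem_or_mem hrj₀).resolve_right hj₀P
    have : (DirectSum.decompose 𝒜 r g : R) ∈ P := hPhom g hrP
    exact Ideal.mul_mem_right _ _ this

/-- If `I` is a graded radical ideal of a `G`-graded commutative ring with `G` a torsion-free
abelian group and `J` is an arbitrary ideal, then the colon ideal `I :_R J` is graded. -/
theorem colon_of_graded_radical_isHomogeneous
    {G : Type*} [AddCommGroup G] [DecidableEq G]
    (hG : ∀ (n : ℕ) (x : G), n ≠ 0 → n • x = 0 → x = 0)
    {R : Type*} [CommRing R] (𝒜 : G → AddSubgroup R) [GradedRing 𝒜]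
    (I J : Ideal R) (hI : Ideal.IsHomogeneous 𝒜 I) (hrad : I.IsRadical) :
    Ideal.IsHomogeneous 𝒜 (I.colon J) := by
  classical
  -- Step 1: embed `G` into a linearly ordered abelian group.
  -- `G` is torsion-free as a `ℤ`-module.
  have hzsmul : ∀ (n : ℤ) (x : G), n ≠ 0 → n • x = 0 → x = 0 := by
    intro n x hn hnx
    have h1 : (n.natAbs : ℤ) • x = 0 := by
      rcases Int.natAbs_eq n with h | h
      · rw [← h]; exact hnx
      · have habs : (n.natAbs : ℤ) = -n := by omega
        rw [habs, neg_smul, hnx, neg_zero]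
    have h2 : n.natAbs • x = 0 := by
      rwa [natCast_zsmul] at h1
    exact hG n.natAbs x (Int.natAbs_ne_zero.mpr hn) h2
  -- the natural map to `TensorProduct ℤ ℚ G`
  let f : G →ₗ[ℤ] (TensorProduct ℤ ℚ G) := TensorProduct.mk ℤ ℚ G 1
  have hbc : IsBaseChange ℚ f := TensorProduct.isBaseChange ℤ G ℚ
  haveI : IsLocalizedModule (nonZeroDivisors ℤ) f :=
    (isLocalizedModule_iff_isBaseChange (nonZeroDivisors ℤ) ℚ f).mpr hbc
  have hfinj : Function.Injective f := by
    rw [injective_iff_map_eq_zero]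
    intro a ha
    obtain ⟨s, hs⟩ := (IsLocalizedModule.eq_zero_iff (nonZeroDivisors ℤ) f).mp ha
    exact hzsmul s a (nonZeroDivisors.coe_ne_zero s) hs
  -- choose a basis of the `ℚ`-vector space `TensorProduct ℤ ℚ G`
  let b := Module.Basis.ofVectorSpace ℚ (TensorProduct ℤ ℚ G)
  letI : LinearOrder (Module.Basis.ofVectorSpaceIndex ℚ (TensorProduct ℤ ℚ G)) :=
    IsWellOrder.linearOrder WellOrderingRel
  -- the composite embedding into the lexicographic group
  let e : G →+ Lex ((Module.Basis.ofVectorSpaceIndex ℚ (TensorProduct ℤ ℚ G)) →₀ ℚ) :=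
    { toFun := fun g => toLex (b.repr (f g))
      map_zero' := by simp
      map_add' := fun x y => by simp }
  have heinj : Function.Injective e := by
    intro x y hxy
    apply hfinj
    apply b.repr.injective
    exact toLex.injective hxy
  have he_add : ∀ x y : G, e (x + y) = e x + e y := fun x y => map_add e x y
  -- Step 2: transfer the linear order to `G`.
  letI lo : LinearOrder G := LinearOrder.lift' (fun g => e g) heinj
  letI : LinearOrder G :=
    { lo with
      toDecidableEq := ‹DecidableEq G›
      compare := fun a b => @compareOfLessAndEq G a b _ (lo.toDecidableLT a b) ‹DecidableEq G›
      compare_eq_compareOfLessAndEq := fun _ _ => rfl }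
  have hle : ∀ a b : G, a ≤ b ↔ e a ≤ e b := fun _ _ => Iff.rfl
  letI : IsOrderedCancelAddMonoid G :=
    { add_le_add_left := fun a b h c => by
        rw [hle] at h ⊢
        rw [he_add, he_add]
        exact add_le_add h le_rfl
      le_of_add_le_add_left := fun a b c h => by
        rw [hle] at h ⊢
        rw [he_add, he_add] at h
        exact le_of_add_le_add_left h }
  exact colon_aux 𝒜 I J hI hrad
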